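/- Let k be a field and A a finite-dimensional k-algebra. The assignment S ↦ T(S), sending a brick S to the smallest torsion class containing S, induces a bijection from isomorphism classes of bricks in mod A to completely join-irreducible torsion classes: (i) for every brick S, T(S) is completely join-irreducible; (ii) every completely join-irreducible torsion class equals T(S) for some brick S; (iii) if S and S' are bricks with T(S) = T(S'), then S ≅ S'. -/

import Mathlib

universe u

/-- A torsion class in the category `mod A` of finitely generated `A`-modules:
a class of finitely generated modules, containing the zero modules, closed under
isomorphism, images of surjective homomorphisms (factor modules) and extensions. -/
def IsTorsionClass (A : Type u) [Ring A] (T : Set (ModuleCat.{u} A)) : Prop :=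
  (∀ M ∈ T, Module.Finite A M) ∧
  (∀ M : ModuleCat.{u} A, Subsingleton M → M ∈ T) ∧
  (∀ M N : ModuleCat.{u} A, M ∈ T → Nonempty (M ≃ₗ[A] N) → N ∈ T) ∧
  (∀ (M N : ModuleCat.{u} A) (f : M →ₗ[A] N), Function.Surjective f → M ∈ T → N ∈ T) ∧
  (∀ (M : ModuleCat.{u} A) (S : Submodule A M),
     ModuleCat.of A S ∈ T → ModuleCat.of A (M ⧸ S) ∈ T → M ∈ T)

/-- The smallest torsion class containing a class `C` of modules: the intersection of
all torsion classes containing `C`. -/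
def torsGen (A : Type u) [Ring A] (C : Set (ModuleCat.{u} A)) : Set (ModuleCat.{u} A) :=
  ⋂₀ {T | IsTorsionClass A T ∧ C ⊆ T}

/-- A brick: a nonzero finitely generated module all of whose nonzero endomorphisms are
invertible. -/
def IsBrick (A : Type u) [Ring A] (S : ModuleCat.{u} A) : Prop :=
  Nontrivial S ∧ Module.Finite A S ∧ ∀ f : S →ₗ[A] S, f ≠ 0 → Function.Bijective f

/- ### Auxiliary lemmas -/

section Aux

open Function

attribute [local instance] RestrictScalars.moduleOrig

variable {A : Type u} [Ring A]

/-- Extensions of finite modules are finite. -/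
lemma finite_of_sub_quot {M : ModuleCat.{u} A} (S : Submodule A M)
    (h1 : Module.Finite A S) (h2 : Module.Finite A (M ⧸ S)) : Module.Finite A M := by
  rw [Module.finite_def]
  apply Submodule.fg_of_fg_map_of_fg_inf_ker S.mkQ
  · rw [Submodule.map_top, Submodule.range_mkQ]
    exact Module.finite_def.mp h2
  · rw [top_inf_eq, Submodule.ker_mkQ]
    exact Module.Finite.iff_fg.mp h1

/-- The class of all finite modules is a torsion class. -/
lemma topClass_isTorsionClass :
    IsTorsionClass A {M : ModuleCat.{u} A | Module.Finite A M} := by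
  refine ⟨fun M hM => hM, fun M hM => ?_,
    fun M N hM ⟨e⟩ => by haveI : Module.Finite A M := hM; exact Module.Finite.equiv e,
    fun M N f hf hM => by haveI : Module.Finite A M := hM; exact Module.Finite.of_surjective f hf,
    fun M S h1 h2 => finite_of_sub_quot S h1 h2⟩
  · haveI := hM
    exact Module.Finite.of_finite

/-- A nonempty intersection of torsion classes is a torsion class. -/
lemma isTorsionClass_sInter {F : Set (Set (ModuleCat.{u} A))} (hne : F.Nonempty)
    (h : ∀ T ∈ F, IsTorsionClass A T) : IsTorsionClass A (⋂₀ F) := by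
  obtain ⟨T0, hT0⟩ := hne
  exact ⟨fun M hM => (h T0 hT0).1 M (hM T0 hT0),
    fun M hM U hU => (h U hU).2.1 M hM,
    fun M N hM he U hU => (h U hU).2.2.1 M N (hM U hU) he,
    fun M N f hf hM U hU => (h U hU).2.2.2.1 M N f hf (hM U hU),
    fun M S h1 h2 U hU => (h U hU).2.2.2.2 M S (h1 U hU) (h2 U hU)⟩

lemma subset_torsGen {C : Set (ModuleCat.{u} A)} : C ⊆ torsGen A C :=
  fun _M hM _U hU => hU.2 hM

lemma torsGen_subset {C T : Set (ModuleCat.{u} A)} (hT : IsTorsionClass A T)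
    (hC : C ⊆ T) : torsGen A C ⊆ T :=
  Set.sInter_subset_of_mem ⟨hT, hC⟩

lemma isTorsionClass_torsGen {C : Set (ModuleCat.{u} A)}
    (h : ∀ M ∈ C, Module.Finite A M) : IsTorsionClass A (torsGen A C) :=
  isTorsionClass_sInter ⟨_, topClass_isTorsionClass, h⟩ (fun _T hT => hT.1)

/-- The class of modules with no nonzero map to a fixed module `B` is a torsion class. -/
lemma isTorsionClass_homZero (B : ModuleCat.{u} A) :
    IsTorsionClass A {X : ModuleCat.{u} A |
      Module.Finite A X ∧ ∀ f : X →ₗ[A] B, f = 0} := by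
  refine ⟨fun M hM => hM.1, fun M hM => ?_, fun M N hM ⟨e⟩ => ?_, fun M N f hf hM => ?_,
    fun M S h1 h2 => ?_⟩
  · haveI := hM
    refine ⟨Module.Finite.of_finite, fun f => ?_⟩
    ext x
    simp [Subsingleton.elim x (0 : M)]
  · haveI := hM.1
    refine ⟨Module.Finite.equiv e, fun f => ?_⟩
    have h0 := hM.2 (f ∘ₗ (e : M →ₗ[A] N))
    ext n
    obtain ⟨m, rfl⟩ := e.surjective n
    exact DFunLike.congr_fun h0 m
  · haveI := hM.1
    refine ⟨Module.Finite.of_surjective f hf, fun g => ?_⟩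
    have h0 := hM.2 (g ∘ₗ f)
    ext n
    obtain ⟨m, rfl⟩ := hf n
    exact DFunLike.congr_fun h0 m
  · refine ⟨finite_of_sub_quot S h1.1 h2.1, fun f => ?_⟩
    have hres : f ∘ₗ S.subtype = 0 := h1.2 (f ∘ₗ S.subtype)
    have hle : S ≤ LinearMap.ker f := fun x hx => by
      simpa using DFunLike.congr_fun hres (⟨x, hx⟩ : S)
    have h0 : S.liftQ f hle = 0 := h2.2 (S.liftQ f hle)
    have hfac : f = (S.liftQ f hle) ∘ₗ S.mkQ := (S.liftQ_mkQ f hle).symm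
    rw [hfac, h0, LinearMap.zero_comp]

/-- The class of modules all of whose maps to a fixed module `B` are zero or surjective
is a torsion class. -/
lemma isTorsionClass_surjOrZero (B : ModuleCat.{u} A) :
    IsTorsionClass A {X : ModuleCat.{u} A |
      Module.Finite A X ∧ ∀ f : X →ₗ[A] B, f = 0 ∨ Surjective f} := by
  refine ⟨fun M hM => hM.1, fun M hM => ?_, fun M N hM ⟨e⟩ => ?_, fun M N f hf hM => ?_,
    fun M S h1 h2 => ?_⟩
  · haveI := hM
    refine ⟨Module.Finite.of_finite, fun f => Or.inl ?_⟩
    ext x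
    simp [Subsingleton.elim x (0 : M)]
  · haveI := hM.1
    refine ⟨Module.Finite.equiv e, fun f => ?_⟩
    rcases hM.2 (f ∘ₗ (e : M →ₗ[A] N)) with h0 | hs
    · refine Or.inl ?_
      ext n
      obtain ⟨m, rfl⟩ := e.surjective n
      exact DFunLike.congr_fun h0 m
    · refine Or.inr (fun b => ?_)
      obtain ⟨m, hm⟩ := hs b
      exact ⟨e m, hm⟩
  · haveI := hM.1
    refine ⟨Module.Finite.of_surjective f hf, fun g => ?_⟩
    rcases hM.2 (g ∘ₗ f) with h0 | hs
    · refine Or.inl ?_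
      ext n
      obtain ⟨m, rfl⟩ := hf n
      exact DFunLike.congr_fun h0 m
    · refine Or.inr (fun b => ?_)
      obtain ⟨m, hm⟩ := hs b
      exact ⟨f m, hm⟩
  · refine ⟨finite_of_sub_quot S h1.1 h2.1, fun f => ?_⟩
    rcases h1.2 (f ∘ₗ S.subtype) with h0 | hs
    · -- the restriction to S vanishes, so f factors through the quotient
      have hle : S ≤ LinearMap.ker f := fun x hx => by
        simpa using DFunLike.congr_fun h0 (⟨x, hx⟩ : S)
      rcases h2.2 (S.liftQ f hle) with hq0 | hqs
      · refine Or.inl ?_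
        have hfac : f = (S.liftQ f hle) ∘ₗ S.mkQ := (S.liftQ_mkQ f hle).symm
        rw [hfac, hq0, LinearMap.zero_comp]
      · refine Or.inr (fun b => ?_)
        obtain ⟨q, hq⟩ := hqs b
        obtain ⟨m, rfl⟩ := S.mkQ_surjective q
        exact ⟨m, by simpa using hq⟩
    · refine Or.inr (fun b => ?_)
      obtain ⟨s, hs'⟩ := hs b
      exact ⟨S.subtype s, hs'⟩

lemma brick_mem_surjOrZero {B : ModuleCat.{u} A} (hB : IsBrick A B) :
    B ∈ {X : ModuleCat.{u} A |
      Module.Finite A X ∧ ∀ f : X →ₗ[A] B, f = 0 ∨ Surjective f} := by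
  refine ⟨hB.2.1, fun f => ?_⟩
  by_cases h : f = 0
  · exact Or.inl h
  · exact Or.inr (hB.2.2 f h).2

/-- Every nonzero map from a module of `torsGen {B}` to the brick `B` is surjective. -/
lemma hom_surj_of_mem_torsGen {B : ModuleCat.{u} A} (hB : IsBrick A B)
    {X : ModuleCat.{u} A} (hX : X ∈ torsGen A {B}) (f : X →ₗ[A] B) (hf : f ≠ 0) :
    Surjective f := by
  have hsub : torsGen A {B} ⊆ {X : ModuleCat.{u} A |
      Module.Finite A X ∧ ∀ f : X →ₗ[A] B, f = 0 ∨ Surjective f} :=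
    torsGen_subset (isTorsionClass_surjOrZero B)
      (Set.singleton_subset_iff.2 (brick_mem_surjOrZero hB))
  exact ((hsub hX).2 f).resolve_left hf

/-- If `X ∈ torsGen {B'}` and `B ∈ torsGen {B'} ⊆` the hom-zero class fails,
there is a nonzero map. -/
lemma exists_nonzero_hom {B B' : ModuleCat.{u} A} (hB : IsBrick A B)
    (hB' : IsBrick A B') (h : torsGen A {B} = torsGen A {B'}) :
    ∃ f : B' →ₗ[A] B, f ≠ 0 := by
  by_contra hc
  push_neg at hc
  have hmem : B' ∈ {X : ModuleCat.{u} A |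
      Module.Finite A X ∧ ∀ f : X →ₗ[A] B, f = 0} := ⟨hB'.2.1, fun f => hc f⟩
  have hsub : torsGen A {B'} ⊆ {X : ModuleCat.{u} A |
      Module.Finite A X ∧ ∀ f : X →ₗ[A] B, f = 0} :=
    torsGen_subset (isTorsionClass_homZero B) (Set.singleton_subset_iff.2 hmem)
  have hBmem : B ∈ torsGen A {B'} := h ▸ subset_torsGen rfl
  have h0 := (hsub hBmem).2 LinearMap.id
  haveI := hB.1
  obtain ⟨x, hx⟩ := exists_ne (0 : B)
  exact hx (DFunLike.congr_fun h0 x)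

/-- Part (iii): bricks generating the same torsion class are isomorphic. -/
lemma brick_iso {B B' : ModuleCat.{u} A} (hB : IsBrick A B) (hB' : IsBrick A B')
    (h : torsGen A {B} = torsGen A {B'}) : Nonempty (B ≃ₗ[A] B') := by
  obtain ⟨f, hf⟩ := exists_nonzero_hom hB hB' h
  obtain ⟨g, hg⟩ := exists_nonzero_hom hB' hB h.symm
  have hB'mem : B' ∈ torsGen A {B} := h ▸ subset_torsGen rfl
  have hBmem : B ∈ torsGen A {B'} := h ▸ subset_torsGen rfl
  have hfs : Surjective f := hom_surj_of_mem_torsGen hB hB'mem f hf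
  have hgs : Surjective g := hom_surj_of_mem_torsGen hB' hBmem g hg
  have hfg : (f ∘ₗ g : B →ₗ[A] B) ≠ 0 := by
    intro h0
    haveI := hB.1
    obtain ⟨x, hx⟩ := exists_ne (0 : B)
    obtain ⟨y, hy⟩ := (hfs.comp hgs) x
    apply hx
    rw [← hy]
    exact DFunLike.congr_fun h0 y
  have hbij := hB.2.2 (f ∘ₗ g) hfg
  have hginj : Injective g := fun a b hab => hbij.1 (by simp [LinearMap.comp_apply, hab])
  exact ⟨LinearEquiv.ofBijective g ⟨hginj, hgs⟩⟩

/-- Part (i), join-irreducibility. -/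
lemma torsGen_brick_cji {B : ModuleCat.{u} A} (hB : IsBrick A B)
    (𝒮 : Set (Set (ModuleCat.{u} A))) (h𝒮 : ∀ U ∈ 𝒮, IsTorsionClass A U)
    (hje : torsGen A (⋃₀ 𝒮) = torsGen A {B}) : torsGen A {B} ∈ 𝒮 := by
  by_contra hc
  have hU_ne : ∀ U ∈ 𝒮, U ≠ torsGen A {B} := fun U hU he => hc (he ▸ hU)
  have hW : torsGen A {B} ⊆ {X : ModuleCat.{u} A |
      Module.Finite A X ∧ ∀ f : X →ₗ[A] B, f = 0 ∨ Surjective f} :=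
    torsGen_subset (isTorsionClass_surjOrZero B)
      (Set.singleton_subset_iff.2 (brick_mem_surjOrZero hB))
  have hVB : ⋃₀ 𝒮 ⊆ {X : ModuleCat.{u} A |
      Module.Finite A X ∧ ∀ f : X →ₗ[A] B, f = 0} := by
    rintro X ⟨U, hU, hXU⟩
    refine ⟨(h𝒮 U hU).1 X hXU, fun f => ?_⟩
    by_contra hfne
    have hXT : X ∈ torsGen A {B} :=
      hje ▸ subset_torsGen (Set.subset_sUnion_of_mem hU hXU)
    have hsurj : Surjective f := ((hW hXT).2 f).resolve_left hfne
    have hBU : B ∈ U := (h𝒮 U hU).2.2.2.1 X B f hsurj hXU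
    have h1 : torsGen A {B} ⊆ U :=
      torsGen_subset (h𝒮 U hU) (Set.singleton_subset_iff.2 hBU)
    have h2 : U ⊆ torsGen A {B} := fun Y hY =>
      hje ▸ subset_torsGen (Set.subset_sUnion_of_mem hU hY)
    exact hU_ne U hU (h2.antisymm h1)
  have hsub : torsGen A {B} ⊆ {X : ModuleCat.{u} A |
      Module.Finite A X ∧ ∀ f : X →ₗ[A] B, f = 0} := by
    rw [← hje]
    exact torsGen_subset (isTorsionClass_homZero B) hVB
  have hBV := hsub (subset_torsGen rfl)
  have h0 := hBV.2 LinearMap.id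
  haveI := hB.1
  obtain ⟨x, hx⟩ := exists_ne (0 : B)
  exact hx (DFunLike.congr_fun h0 x)

section Field

variable (k : Type u) [Field k] [Algebra k A]

instance addCommMonoidRestrictScalarsGroup (X : Type u) [AddCommGroup X] :
    AddCommMonoid (RestrictScalars k A X) :=
  AddCommGroup.toAddCommMonoid

instance moduleRestrictScalarsGroup (X : Type u) [AddCommGroup X] [Module A X] :
    @Module k (RestrictScalars k A X) _ AddCommGroup.toAddCommMonoid :=
  RestrictScalars.module k A X

instance moduleOrigRestrictScalarsGroup (X : Type u) [AddCommGroup X] [Module A X] :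
    @Module A (RestrictScalars k A X) _ AddCommGroup.toAddCommMonoid :=
  RestrictScalars.moduleOrig k A X

/-- `A`-linear maps are `k`-linear for the restricted scalar structure. -/
def kmap {X Y : Type u} [AddCommGroup X] [AddCommGroup Y] [Module A X] [Module A Y]
    (f : X →ₗ[A] Y) : RestrictScalars k A X →ₗ[k] RestrictScalars k A Y where
  toFun := f
  map_add' := f.map_add
  map_smul' c x := f.map_smul (algebraMap k A c) x

lemma finrank_lt_of_submodule_ne_top {M : ModuleCat.{u} A}
    [FiniteDimensional k (RestrictScalars k A M)] (N : Submodule A M) (hne : N ≠ ⊤) :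
    Module.finrank k (RestrictScalars k A N) <
      Module.finrank k (RestrictScalars k A M) := by
  set g := kmap (A := A) k N.subtype with hg
  have hginj : Injective g := N.injective_subtype
  haveI : FiniteDimensional k (RestrictScalars k A N) :=
    FiniteDimensional.of_injective g hginj
  have hle := LinearMap.finrank_le_finrank_of_injective hginj
  rcases hle.lt_or_eq with hlt | heq
  · exact hlt
  · exfalso
    have hs := (LinearMap.injective_iff_surjective_of_finrank_eq_finrank heq).1 hginj
    apply hne
    rw [eq_top_iff]
    intro x _
    obtain ⟨y, hy⟩ := hs x
    exact hy ▸ y.2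

lemma finrank_quot_lt {M : ModuleCat.{u} A}
    [FiniteDimensional k (RestrictScalars k A M)] (N : Submodule A M) (hne : N ≠ ⊥) :
    Module.finrank k (RestrictScalars k A (M ⧸ N)) <
      Module.finrank k (RestrictScalars k A M) := by
  set g := kmap (A := A) k N.mkQ with hg
  have hgsurj : Surjective g := N.mkQ_surjective
  haveI : FiniteDimensional k (RestrictScalars k A (M ⧸ N)) :=
    Module.Finite.of_surjective g hgsurj
  have hle : Module.finrank k (RestrictScalars k A (M ⧸ N)) ≤
      Module.finrank k (RestrictScalars k A M) := by
    have hr := LinearMap.finrank_range_le g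
    rwa [LinearMap.range_eq_top.2 hgsurj, finrank_top] at hr
  rcases hle.lt_or_eq with hlt | heq
  · exact hlt
  · exfalso
    have hinj :=
      (LinearMap.injective_iff_surjective_of_finrank_eq_finrank heq.symm).2 hgsurj
    obtain ⟨x, hxN, hx0⟩ := (Submodule.ne_bot_iff N).1 hne
    apply hx0
    apply hinj
    show N.mkQ x = N.mkQ 0
    rw [map_zero]
    exact (Submodule.Quotient.mk_eq_zero N).2 hxN

/-- Part (ii): every completely join-irreducible torsion class is generated by a brick. -/
lemma cji_exists_brick [FiniteDimensional k A] (T : Set (ModuleCat.{u} A))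
    (hT : IsTorsionClass A T)
    (hcji : ∀ 𝒮 : Set (Set (ModuleCat.{u} A)), (∀ U ∈ 𝒮, IsTorsionClass A U) →
        torsGen A (⋃₀ 𝒮) = T → T ∈ 𝒮) :
    ∃ S : ModuleCat.{u} A, IsBrick A S ∧ torsGen A {S} = T := by
  classical
  set 𝒮p : Set (Set (ModuleCat.{u} A)) := {U | IsTorsionClass A U ∧ U ⊆ T ∧ U ≠ T}
    with h𝒮p
  set Ts := torsGen A (⋃₀ 𝒮p) with hTsdef
  have hsub : ⋃₀ 𝒮p ⊆ T := by
    rintro X ⟨U, hU, hXU⟩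
    exact hU.2.1 hXU
  have hTsT : Ts ⊆ T := torsGen_subset hT hsub
  have hTstors : IsTorsionClass A Ts :=
    isTorsionClass_torsGen (fun M hM => hT.1 M (hsub hM))
  have hTsne : Ts ≠ T := fun he => (hcji 𝒮p (fun U hU => hU.1) he).2.2 rfl
  have hkey : ∀ U : Set (ModuleCat.{u} A),
      IsTorsionClass A U → U ⊆ T → U ≠ T → U ⊆ Ts :=
    fun U h1 h2 h3 =>
      (Set.subset_sUnion_of_mem (show U ∈ 𝒮p from ⟨h1, h2, h3⟩)).trans subset_torsGen
  obtain ⟨M0, hM0T, hM0s⟩ : ∃ M, M ∈ T ∧ M ∉ Ts := by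
    by_contra hcon
    push_neg at hcon
    exact hTsne (hTsT.antisymm hcon)
  set μ : ModuleCat.{u} A → ℕ :=
    fun X => Module.finrank k (RestrictScalars k A X) with hμdef
  obtain ⟨n, ⟨M, hM, hμ⟩, hmin⟩ :=
    (wellFounded_lt (α := ℕ)).has_min {n | ∃ X, (X ∈ T ∧ X ∉ Ts) ∧ μ X = n}
      ⟨μ M0, M0, ⟨hM0T, hM0s⟩, rfl⟩
  haveI hMfin : Module.Finite A M := hT.1 M hM.1
  haveI : Module.Finite A (RestrictScalars k A M) := hMfin
  haveI : FiniteDimensional k (RestrictScalars k A M) := Module.Finite.trans A _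
  have hnontriv : Nontrivial M := by
    rcases subsingleton_or_nontrivial M with hs | hn
    · exact absurd (hTstors.2.1 M hs) hM.2
    · exact hn
  have hbrick : IsBrick A M := by
    refine ⟨hnontriv, hMfin, fun f hf => ?_⟩
    have hsurj : Surjective f := by
      by_contra hns
      have hN0 : LinearMap.range f ≠ ⊥ := by
        rw [Ne, LinearMap.range_eq_bot]; exact hf
      have hNtop : LinearMap.range f ≠ ⊤ := by
        rw [Ne, LinearMap.range_eq_top]; exact hns
      have hNT : ModuleCat.of A (LinearMap.range f) ∈ T :=
        hT.2.2.2.1 M (ModuleCat.of A (LinearMap.range f)) f.rangeRestrict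
          f.surjective_rangeRestrict hM.1
      have hQT : ModuleCat.of A (M ⧸ LinearMap.range f) ∈ T :=
        hT.2.2.2.1 M (ModuleCat.of A (M ⧸ LinearMap.range f))
          (LinearMap.range f).mkQ (Submodule.mkQ_surjective _) hM.1
      by_cases h1 : ModuleCat.of A (LinearMap.range f) ∈ Ts
      · by_cases h2 : ModuleCat.of A (M ⧸ LinearMap.range f) ∈ Ts
        · exact hM.2 (hTstors.2.2.2.2 M (LinearMap.range f) h1 h2)
        · refine hmin (μ (ModuleCat.of A (M ⧸ LinearMap.range f)))
            ⟨_, ⟨hQT, h2⟩, rfl⟩ ?_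
          rw [← hμ]
          exact finrank_quot_lt k (LinearMap.range f) hN0
      · refine hmin (μ (ModuleCat.of A (LinearMap.range f)))
          ⟨_, ⟨hNT, h1⟩, rfl⟩ ?_
        rw [← hμ]
        exact finrank_lt_of_submodule_ne_top k (LinearMap.range f) hNtop
    have hinj : Injective f := by
      have hiff := LinearMap.injective_iff_surjective
        (f := kmap (A := A) k f)
      exact hiff.2 hsurj
    exact ⟨hinj, hsurj⟩
  refine ⟨M, hbrick, ?_⟩
  have hsub2 : torsGen A {M} ⊆ T :=
    torsGen_subset hT (Set.singleton_subset_iff.2 hM.1)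
  by_contra hne2
  refine hM.2 (hkey _ (isTorsionClass_torsGen ?_) hsub2 hne2 (subset_torsGen rfl))
  intro X hX
  rw [Set.mem_singleton_iff] at hX
  subst hX
  exact hMfin

end Field

end Aux

/-- The map `S ↦ torsGen A {S}` induces a bijection from isomorphism classes of bricks
to completely join-irreducible torsion classes:
(i) for every brick `S`, `torsGen A {S}` is a completely join-irreducible torsion class;
(ii) every completely join-irreducible torsion class is of the form `torsGen A {S}` for
some brick `S`;
(iii) bricks generating the same torsion class are isomorphic. -/
theorem bricks_biject_completely_join_irreducible_tors (k A : Type u) [Field k] [Ring A]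
    [Algebra k A] [FiniteDimensional k A] :
    (∀ S : ModuleCat.{u} A, IsBrick A S →
      IsTorsionClass A (torsGen A {S}) ∧
      ∀ 𝒮 : Set (Set (ModuleCat.{u} A)), (∀ U ∈ 𝒮, IsTorsionClass A U) →
        torsGen A (⋃₀ 𝒮) = torsGen A {S} → torsGen A {S} ∈ 𝒮) ∧
    (∀ T : Set (ModuleCat.{u} A), IsTorsionClass A T →
      (∀ 𝒮 : Set (Set (ModuleCat.{u} A)), (∀ U ∈ 𝒮, IsTorsionClass A U) →
        torsGen A (⋃₀ 𝒮) = T → T ∈ 𝒮) →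
      ∃ S : ModuleCat.{u} A, IsBrick A S ∧ torsGen A {S} = T) ∧
    (∀ S S' : ModuleCat.{u} A, IsBrick A S → IsBrick A S' →
      torsGen A {S} = torsGen A {S'} → Nonempty (S ≃ₗ[A] S')) := by
  refine ⟨fun S hS => ⟨isTorsionClass_torsGen ?_, fun 𝒮 h𝒮 hje => torsGen_brick_cji hS 𝒮 h𝒮 hje⟩,
    fun T hT hcji => cji_exists_brick k T hT hcji,
    fun S S' hS hS' h => brick_iso hS hS' h⟩
  intro X hX
  rw [Set.mem_singleton_iff] at hX
  subst hX
  exact hS.2.1
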